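/- arXiv:1311.4402 — 2 statements merged into one kernel-verified Lean document; each statement's English description precedes it below -/
import Mathlib

section
/- Under the hypotheses of the previous statement, if moreover Ω_T(ρ) ≥ M + 1 and ρ > 2M where Ω_T(ρ) = inf{G(t,r)/r : t ∈ [t₀,T], r ≥ ρ}, and |y(t₀)| > ρ, then t ↦ |y(t)| is monotonically increasing on [t₀, T], and in particular |y(t)| > ρ for all t ∈ [t₀, T]. -/
open Set MeasureTheory

/-- If `y` solves `y' = G(t,|y|)y/|y| + A(t)y + g(t)` on `[t₀,T]` with `‖y(t₀)‖ > ρ`,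
where `ρ > 2M` and `Ω_T(ρ) = inf{G(t,r)/r : t ∈ [t₀,T], r ≥ ρ} ≥ M + 1` with `M` an
essential bound for `‖g‖` and `‖A‖`, then `t ↦ ‖y(t)‖` is monotonically increasing on
`[t₀,T]`; in particular `‖y(t)‖ > ρ` on `[t₀,T]`. -/
theorem norm_increasing_of_radial_ode
    {n : ℕ} (t₀ T : ℝ) (ht : t₀ < T)
    (G : ℝ → ℝ → ℝ) (A : ℝ → EuclideanSpace ℝ (Fin n) →L[ℝ] EuclideanSpace ℝ (Fin n))
    (g : ℝ → EuclideanSpace ℝ (Fin n))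
    (y : ℝ → EuclideanSpace ℝ (Fin n))
    (M ρ : ℝ) (hM0 : 0 ≤ M)
    (hM : ∀ t ∈ Icc t₀ T, ‖g t‖ ≤ M ∧ ‖A t‖ ≤ M)
    (hρ : ρ > 2 * M)
    (hΩ : ∀ t ∈ Icc t₀ T, ∀ r : ℝ, ρ ≤ r → M + 1 ≤ G t r / r)
    (hynz : ∀ t ∈ Icc t₀ T, ‖y t‖ > 0)
    (hy0 : ‖y t₀‖ > ρ)
    (hy : ∀ t ∈ Icc t₀ T,
      HasDerivAt y (G t ‖y t‖ • (‖y t‖⁻¹ • y t) + A t (y t) + g t) t) :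
    MonotoneOn (fun t => ‖y t‖) (Icc t₀ T) ∧ ∀ t ∈ Icc t₀ T, ‖y t‖ > ρ := by
  have hρM : M < ρ := by nlinarith
  set v : ℝ → EuclideanSpace ℝ (Fin n) :=
    fun t => G t ‖y t‖ • (‖y t‖⁻¹ • y t) + A t (y t) + g t with hv
  -- the squared-norm function and its derivative
  set f : ℝ → ℝ := fun t => inner ℝ (y t) (y t) with hfdef
  have hfeq : ∀ t, f t = ‖y t‖ ^ 2 := fun t => real_inner_self_eq_norm_sq (y t)
  have hf' : ∀ t ∈ Icc t₀ T,
      HasDerivAt f (2 * inner ℝ (y t) (v t)) t := by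
    intro t htm
    have := (hy t htm).inner ℝ (hy t htm)
    have h2 : (inner ℝ (y t) (v t) + inner ℝ (v t) (y t) : ℝ) = 2 * inner ℝ (y t) (v t) := by
      rw [real_inner_comm (v t) (y t)]; ring
    rw [h2] at this
    exact this
  -- continuity
  have hcy : ContinuousOn y (Icc t₀ T) := fun t htm =>
    (hy t htm).continuousAt.continuousWithinAt
  have hcf : ContinuousOn f (Icc t₀ T) := by
    exact (hcy.inner hcy)
  -- positivity of the derivative where ‖y t‖ ≥ ρ
  have hpos : ∀ t ∈ Icc t₀ T, ρ ≤ ‖y t‖ → 0 < 2 * (inner ℝ (y t) (v t) : ℝ) := by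
    intro t htm hr
    have hny : (0:ℝ) < ‖y t‖ := hynz t htm
    have hG : M + 1 ≤ G t ‖y t‖ / ‖y t‖ := hΩ t htm _ hr
    have hG' : (M + 1) * ‖y t‖ ≤ G t ‖y t‖ := (le_div_iff₀ hny).mp hG
    have hA : |(inner ℝ (y t) (A t (y t)) : ℝ)| ≤ M * ‖y t‖ ^ 2 := by
      calc |(inner ℝ (y t) (A t (y t)) : ℝ)| ≤ ‖y t‖ * ‖A t (y t)‖ :=
            abs_real_inner_le_norm _ _
        _ ≤ ‖y t‖ * (‖A t‖ * ‖y t‖) := by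
            gcongr; exact (A t).le_opNorm (y t)
        _ ≤ ‖y t‖ * (M * ‖y t‖) := by
            have := (hM t htm).2
            gcongr
        _ = M * ‖y t‖ ^ 2 := by ring
    have hg : |(inner ℝ (y t) (g t) : ℝ)| ≤ M * ‖y t‖ := by
      calc |(inner ℝ (y t) (g t) : ℝ)| ≤ ‖y t‖ * ‖g t‖ := abs_real_inner_le_norm _ _
        _ ≤ ‖y t‖ * M := by have := (hM t htm).1; gcongr
        _ = M * ‖y t‖ := by ring
    have hinner : (inner ℝ (y t) (v t) : ℝ) =
        G t ‖y t‖ * ‖y t‖ + inner ℝ (y t) (A t (y t)) + inner ℝ (y t) (g t) := by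
      rw [hv]
      simp only [inner_add_right, real_inner_smul_right]
      rw [real_inner_self_eq_norm_sq]
      have : ‖y t‖⁻¹ * ‖y t‖ ^ 2 = ‖y t‖ := by
        field_simp
      rw [this]
    have h1 : -(M * ‖y t‖ ^ 2) ≤ (inner ℝ (y t) (A t (y t)) : ℝ) := neg_le_of_abs_le hA
    have h2 : -(M * ‖y t‖) ≤ (inner ℝ (y t) (g t) : ℝ) := neg_le_of_abs_le hg
    have hρ' : M < ‖y t‖ := lt_of_lt_of_le hρM hr
    nlinarith [hinner, sq_nonneg ‖y t‖]
  -- key monotonicity lemma on subintervals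
  have key : ∀ a b : ℝ, t₀ ≤ a → b ≤ T → (∀ t ∈ Ioo a b, ρ ≤ ‖y t‖) →
      StrictMonoOn f (Icc a b) := by
    intro a b ha hb hge
    have hsub : Icc a b ⊆ Icc t₀ T := Icc_subset_Icc ha hb
    apply strictMonoOn_of_hasDerivWithinAt_pos (convex_Icc a b) (hcf.mono hsub)
      (f' := fun t => 2 * inner ℝ (y t) (v t))
    · intro x hx
      rw [interior_Icc] at hx
      exact ((hf' x (hsub (Ioo_subset_Icc_self hx))).hasDerivWithinAt)
    · intro x hx
      rw [interior_Icc] at hx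
      exact hpos x (hsub (Ioo_subset_Icc_self hx)) (hge x hx)
  -- first claim: ‖y t‖ > ρ on [t₀, T]
  have hgt : ∀ t ∈ Icc t₀ T, ρ < ‖y t‖ := by
    by_contra hcon
    push_neg at hcon
    obtain ⟨t₁, ht₁, ht₁le⟩ := hcon
    set B : Set ℝ := Icc t₀ T ∩ (fun t => ‖y t‖) ⁻¹' Iic ρ with hB
    have hBne : B.Nonempty := ⟨t₁, ht₁, ht₁le⟩
    have hBclosed : IsClosed B :=
      hcy.norm.preimage_isClosed_of_isClosed isClosed_Icc isClosed_Iic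
    have hBbdd : BddBelow B := ⟨t₀, fun x hx => hx.1.1⟩
    set s := sInf B with hs
    have hsB : s ∈ B := hBclosed.csInf_mem hBne hBbdd
    have hsIcc : s ∈ Icc t₀ T := hsB.1
    have hsle : ‖y s‖ ≤ ρ := hsB.2
    have hst₀ : t₀ < s := by
      rcases lt_or_eq_of_le hsIcc.1 with h | h
      · exact h
      · exact absurd hsle (by rw [← h]; linarith)
    have hIoo : ∀ t ∈ Ioo t₀ s, ρ ≤ ‖y t‖ := by
      intro t htm
      by_contra hlt
      push_neg at hlt
      have htB : t ∈ B := ⟨⟨le_of_lt htm.1, le_trans (le_of_lt htm.2) hsIcc.2⟩, le_of_lt hlt⟩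
      exact absurd (csInf_le hBbdd htB) (not_le.mpr htm.2)
    have hmono := key t₀ s le_rfl hsIcc.2 hIoo
    have := hmono (left_mem_Icc.mpr (le_of_lt hst₀)) (right_mem_Icc.mpr (le_of_lt hst₀)) hst₀
    rw [hfeq, hfeq] at this
    have hρ0 : (0:ℝ) ≤ ρ := by linarith
    have h1 : ‖y s‖ ^ 2 ≤ ρ ^ 2 := by nlinarith [norm_nonneg (y s)]
    nlinarith
  refine ⟨?_, fun t htm => hgt t htm⟩
  -- monotonicity on the whole interval
  have hmono := key t₀ T le_rfl le_rfl (fun t htm =>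
    le_of_lt (hgt t ⟨le_of_lt htm.1, le_of_lt htm.2⟩))
  intro a ha b hb hab
  have := hmono.monotoneOn ha hb hab
  rw [hfeq, hfeq] at this
  simp only
  nlinarith [norm_nonneg (y a), norm_nonneg (y b)]
end

section
/- Let y : [0, T̄) → ℝⁿ be a solution of (1/2)(d/dt)|y(t)|² ≤ (G(t,|y(t)|)/|y(t)| + M)|y(t)|² + M|y(t)| with lim_{t→T̄⁻} |y(t)| = +∞ and T̄ < ∞. Then ∫₀^t (G(s,|y(s)|)/|y(s)| + M) ds → +∞ as t → T̄⁻. -/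
open Set MeasureTheory Filter intervalIntegral

/-- If `y : [0,T̄) → ℝⁿ` satisfies
`(1/2) d/dt |y(t)|² ≤ (G(t,|y(t)|)/|y(t)| + M)|y(t)|² + M|y(t)|` and `|y(t)| → ∞` as
`t → T̄⁻` with `T̄ < ∞`, then `∫₀^t (G(s,|y(s)|)/|y(s)| + M) ds → +∞` as `t → T̄⁻`. -/
theorem integral_diverges_at_blowup
    {n : ℕ} (Tb : ℝ) (hTb : 0 < Tb) (M : ℝ) (hM : 0 ≤ M)
    (G : ℝ → ℝ → ℝ)
    (y : ℝ → EuclideanSpace ℝ (Fin n))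
    (hycont : ContinuousOn y (Ico 0 Tb))
    (hynz : ∀ t ∈ Ico (0:ℝ) Tb, ‖y t‖ > 0)
    (hyderiv : ∀ t ∈ Ico (0:ℝ) Tb,
      DifferentiableAt ℝ (fun s => ‖y s‖ ^ 2) t ∧
      deriv (fun s => ‖y s‖ ^ 2) t / 2 ≤
        (G t ‖y t‖ / ‖y t‖ + M) * ‖y t‖ ^ 2 + M * ‖y t‖)
    (hint : ∀ t ∈ Ico (0:ℝ) Tb,
      IntervalIntegrable (fun s => G s ‖y s‖ / ‖y s‖ + M) MeasureTheory.volume 0 t)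
    (hblow : Tendsto (fun t => ‖y t‖) (nhdsWithin Tb (Iio Tb)) atTop) :
    Tendsto (fun t => ∫ s in (0:ℝ)..t, (G s ‖y s‖ / ‖y s‖ + M))
      (nhdsWithin Tb (Iio Tb)) atTop := by
  set g : ℝ → ℝ := fun s => G s ‖y s‖ / ‖y s‖ + M with hg
  set f : ℝ → ℝ := fun s => Real.log (‖y s‖ ^ 2) / 2 with hf
  -- obtain t₀ with 0 < t₀ < Tb and ‖y t‖ ≥ 1 on [t₀, Tb)
  obtain ⟨a, haTb, hsub⟩ := mem_nhdsLT_iff_exists_Ioo_subset.1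
    (hblow.eventually_ge_atTop 1)
  set t₀ : ℝ := max ((a + Tb) / 2) (Tb / 2) with ht₀
  have ht₀Tb : t₀ < Tb := max_lt (by linarith [mem_Iio.1 haTb]) (by linarith)
  have ht₀a : a < t₀ := lt_max_of_lt_left (by linarith [mem_Iio.1 haTb])
  have ht₀pos : 0 < t₀ := lt_max_of_lt_right (by linarith)
  have hy1 : ∀ t ∈ Ico t₀ Tb, 1 ≤ ‖y t‖ := fun t ht =>
    hsub ⟨lt_of_lt_of_le ht₀a ht.1, ht.2⟩
  -- continuity of f on Ico 0 Tb
  have hfcont : ContinuousOn f (Ico 0 Tb) := by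
    apply ContinuousOn.div_const
    apply ContinuousOn.log
    · exact (hycont.norm).pow 2
    · intro t ht
      exact ne_of_gt (pow_pos (hynz t ht) 2)
  -- key inequality via FTC
  have key : ∀ t ∈ Ioo t₀ Tb, f t - f t₀ ≤ ∫ s in t₀..t, (g s + M) := by
    intro t ht
    have hsubset : Icc t₀ t ⊆ Ico 0 Tb := fun s hs =>
      ⟨le_trans ht₀pos.le hs.1, lt_of_le_of_lt hs.2 ht.2⟩
    apply sub_le_integral_of_hasDeriv_right_of_le ht.1.le
      (hfcont.mono hsubset)
      (g' := fun x => (‖y x‖ ^ 2)⁻¹ * deriv (fun s => ‖y s‖ ^ 2) x / 2)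
    · intro x hx
      have hxmem : x ∈ Ico (0:ℝ) Tb := hsubset ⟨hx.1.le, hx.2.le⟩
      have hu : DifferentiableAt ℝ (fun s => ‖y s‖ ^ 2) x := (hyderiv x hxmem).1
      have hupos : (0:ℝ) < ‖y x‖ ^ 2 := pow_pos (hynz x hxmem) 2
      have hlog : HasDerivAt (fun s => Real.log (‖y s‖ ^ 2))
          ((‖y x‖ ^ 2)⁻¹ * deriv (fun s => ‖y s‖ ^ 2) x) x :=
        by have h := (Real.hasDerivAt_log hupos.ne').comp x hu.hasDerivAt; exact h
      exact (hlog.div_const 2).hasDerivWithinAt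
    · -- integrability of g + M on Icc t₀ t
      have hii : IntervalIntegrable g volume t₀ t := by
        refine ((hint t ⟨le_trans ht₀pos.le ht.1.le, ht.2⟩).mono_set ?_)
        rw [uIcc_of_le ht.1.le, uIcc_of_le (le_trans ht₀pos.le ht.1.le)]
        exact Icc_subset_Icc ht₀pos.le le_rfl
      have : IntegrableOn g (Icc t₀ t) := by
        rw [integrableOn_Icc_iff_integrableOn_Ioc]
        exact hii.1
      exact this.add (integrableOn_const (C := M) measure_Icc_lt_top.ne)
    · intro x hx
      have hxmem : x ∈ Ico (0:ℝ) Tb := ⟨le_trans ht₀pos.le hx.1.le, hx.2.trans ht.2⟩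
      have hd := (hyderiv x hxmem).2
      have h1 : 1 ≤ ‖y x‖ := hy1 x ⟨hx.1.le, hx.2.trans ht.2⟩
      have hupos : (0:ℝ) < ‖y x‖ ^ 2 := pow_pos (hynz x hxmem) 2
      have heq : (‖y x‖ ^ 2)⁻¹ * deriv (fun s => ‖y s‖ ^ 2) x / 2
          = (deriv (fun s => ‖y s‖ ^ 2) x / 2) / ‖y x‖ ^ 2 := by ring
      rw [heq, div_le_iff₀ hupos]
      have hya : (0:ℝ) ≤ ‖y x‖ := by linarith
      have : M * ‖y x‖ ≤ M * ‖y x‖ ^ 2 := by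
        nlinarith [mul_nonneg (mul_nonneg hM hya) (sub_nonneg.2 h1)]
      calc deriv (fun s => ‖y s‖ ^ 2) x / 2
          ≤ g x * ‖y x‖ ^ 2 + M * ‖y x‖ := hd
        _ ≤ g x * ‖y x‖ ^ 2 + M * ‖y x‖ ^ 2 := by linarith
        _ = (g x + M) * ‖y x‖ ^ 2 := by ring
  -- rewrite the integral splitting
  have ht₀mem : t₀ ∈ Ico (0:ℝ) Tb := ⟨ht₀pos.le, ht₀Tb⟩
  have hev : ∀ᶠ t in nhdsWithin Tb (Iio Tb),
      f t + ((∫ s in (0:ℝ)..t₀, g s) - f t₀ - M * Tb) ≤ ∫ s in (0:ℝ)..t, g s := by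
    filter_upwards [Ioo_mem_nhdsLT_of_mem ⟨ht₀Tb, le_rfl⟩] with t ht
    have htmem : t ∈ Ico (0:ℝ) Tb := ⟨le_trans ht₀pos.le ht.1.le, ht.2⟩
    have hii : IntervalIntegrable g volume t₀ t := by
      refine ((hint t htmem).mono_set ?_)
      rw [uIcc_of_le ht.1.le, uIcc_of_le htmem.1]
      exact Icc_subset_Icc ht₀pos.le le_rfl
    have hsplit : (∫ s in (0:ℝ)..t₀, g s) + ∫ s in t₀..t, g s = ∫ s in (0:ℝ)..t, g s :=
      integral_add_adjacent_intervals (hint t₀ ht₀mem) hii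
    have hK := key t ht
    have hIc : IntervalIntegrable (fun _ : ℝ => M) volume t₀ t := intervalIntegrable_const
    rw [integral_add hii hIc, intervalIntegral.integral_const, smul_eq_mul] at hK
    have hMt : (t - t₀) * M ≤ M * Tb := by
      have hle : t - t₀ ≤ Tb := by linarith [ht.2, ht₀pos]
      nlinarith
    have : f t - f t₀ - M * Tb ≤ ∫ s in t₀..t, g s := by linarith
    linarith [hsplit, this]
  -- f t → ∞
  have hftop : Tendsto f (nhdsWithin Tb (Iio Tb)) atTop := by
    have h2 : Tendsto (fun t => ‖y t‖ ^ 2) (nhdsWithin Tb (Iio Tb)) atTop :=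
      (tendsto_pow_atTop (two_ne_zero)).comp hblow
    have h3 : Tendsto (fun t => Real.log (‖y t‖ ^ 2)) (nhdsWithin Tb (Iio Tb)) atTop :=
      Real.tendsto_log_atTop.comp h2
    exact h3.atTop_div_const two_pos
  exact tendsto_atTop_mono' _ hev ((hftop.atTop_add tendsto_const_nhds))
end
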